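/- Let H be a real Hilbert space, I = {1,...,n}, μ > 0, and for each i ∈ I let λ_i > 0 with Σ_{i∈I} λ_i = 1 and let A_i : H ⇉ H be maximally monotone. Let x and u be points in H. If ⋂_{i∈I} A_i(x) ≠ ∅, then R_μ(A, λ)(x) = ⋂_{i∈I} A_i(x). If ⋂_{i∈I} A_i⁻¹(u) ≠ ∅, then (R_μ(A, λ))⁻¹(u) = ⋂_{i∈I} A_i⁻¹(u). -/
import Mathlib


open RealInnerProductSpace

namespace SVP

variable {H : Type*} [NormedAddCommGroup H] [InnerProductSpace ℝ H]

/-- Inverse of a set-valued mapping: `x ∈ inv A u ↔ u ∈ A x`. -/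
def inv (A : H → Set H) : H → Set H := fun u => {x | u ∈ A x}

/-- Pointwise (Minkowski) sum of two set-valued mappings. -/
def add (A B : H → Set H) : H → Set H := fun x => {w | ∃ u ∈ A x, ∃ v ∈ B x, w = u + v}

/-- Pointwise difference of two set-valued mappings. -/
def sub (A B : H → Set H) : H → Set H := fun x => {w | ∃ u ∈ A x, ∃ v ∈ B x, w = u - v}

/-- Pointwise scalar multiple of a set-valued mapping. -/
def smul (c : ℝ) (A : H → Set H) : H → Set H := fun x => (fun u => c • u) '' A x

/-- The identity as a set-valued mapping. -/
def id' : H → Set H := fun x => {x}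

/-- Composition of set-valued mappings: `(comp A B) x = ⋃ y ∈ B x, A y`. -/
def comp (A B : H → Set H) : H → Set H := fun x => ⋃ y ∈ B x, A y

/-- Weighted pointwise (Minkowski) combination `Σ_i lam i • (B i)`. -/
def lcomb {n : ℕ} (lam : Fin n → ℝ) (B : Fin n → H → Set H) : H → Set H :=
  fun x => {u | ∃ v : Fin n → H, (∀ i, v i ∈ B i x) ∧ u = ∑ i, lam i • v i}

/-- The `λ`-weighted resolvent average with parameter `μ`:
`R_μ(A, λ) = (Σ_i λ_i (A_i + μ⁻¹ Id)⁻¹)⁻¹ − μ⁻¹ Id`. -/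
def resAvg {n : ℕ} (μ : ℝ) (lam : Fin n → ℝ) (A : Fin n → H → Set H) : H → Set H :=
  sub (inv (lcomb lam (fun i => inv (add (A i) (smul μ⁻¹ id'))))) (smul μ⁻¹ id')

/-- Monotonicity of a set-valued mapping. -/
def IsMonotone (A : H → Set H) : Prop :=
  ∀ ⦃x y u v : H⦄, u ∈ A x → v ∈ A y → 0 ≤ ⟪x - y, u - v⟫

/-- Maximal monotonicity: the graph is not properly contained in the graph of
another monotone mapping. -/
def IsMaxMonotone (A : H → Set H) : Prop :=
  IsMonotone A ∧ ∀ B : H → Set H, IsMonotone B → (∀ x, A x ⊆ B x) → ∀ x, B x ⊆ A x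

/-- Domain of a set-valued mapping. -/
def dom (A : H → Set H) : Set H := {x | (A x).Nonempty}

/-- Range of a set-valued mapping. -/
def ran (A : H → Set H) : Set H := {u | ∃ x, u ∈ A x}

/-- Graph of a set-valued mapping. -/
def graph (A : H → Set H) : Set (H × H) := {p | p.2 ∈ A p.1}

end SVP

variable {H : Type*} [NormedAddCommGroup H] [InnerProductSpace ℝ H] [CompleteSpace H]


private lemma mem_resAvg_iff {n : ℕ} (μ : ℝ) (lam : Fin n → ℝ) (A : Fin n → H → Set H)
    (x w : H) :
    w ∈ SVP.resAvg μ lam A x ↔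
      ∃ v : Fin n → H, (∀ i, ∃ a ∈ A i (v i), w + μ⁻¹ • x = a + μ⁻¹ • v i) ∧
        x = ∑ i, lam i • v i := by
  simp only [SVP.resAvg, SVP.sub, SVP.inv, SVP.lcomb, SVP.add, SVP.smul, SVP.id',
    Set.image_singleton, Set.mem_singleton_iff, Set.mem_setOf_eq, exists_eq_left]
  constructor
  · rintro ⟨p, ⟨v, hv, hx⟩, rfl⟩
    refine ⟨v, fun i => ?_, hx⟩
    obtain ⟨a, ha, heq⟩ := hv i
    exact ⟨a, ha, by rw [← heq]; abel⟩
  · rintro ⟨v, hv, hx⟩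
    exact ⟨w + μ⁻¹ • x, ⟨v, fun i => hv i, hx⟩, by abel⟩

private lemma key_forces_eq {n : ℕ} {lam : Fin n → ℝ} (hpos : ∀ i, 0 < lam i)
    (hsum : ∑ i, lam i = 1) {v : Fin n → H} {x : H} (hx : x = ∑ i, lam i • v i)
    {t : ℝ} (ht : 0 < t) (c : H)
    (hineq : ∀ i, t * ‖v i - x‖ ^ 2 ≤ ⟪v i - x, c⟫) : ∀ i, v i = x := by
  have hzero : ∑ i, lam i • (v i - x) = (0 : H) := by
    simp only [smul_sub]
    rw [Finset.sum_sub_distrib, ← Finset.sum_smul, hsum, one_smul, ← hx, sub_self]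
  have hs : ∑ i, lam i * ⟪v i - x, c⟫ = 0 := by
    have h1 : ⟪∑ i, lam i • (v i - x), c⟫ = (0 : ℝ) := by rw [hzero, inner_zero_left]
    rw [← h1, sum_inner]
    exact Finset.sum_congr rfl fun i _ => (real_inner_smul_left _ _ _).symm
  have hnn : ∀ i ∈ Finset.univ, (0 : ℝ) ≤ lam i * (t * ‖v i - x‖ ^ 2) := fun i _ =>
    mul_nonneg (hpos i).le (mul_nonneg ht.le (sq_nonneg _))
  have hle : ∑ i, lam i * (t * ‖v i - x‖ ^ 2) ≤ 0 := by
    rw [← hs]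
    exact Finset.sum_le_sum fun i _ => mul_le_mul_of_nonneg_left (hineq i) (hpos i).le
  have heq0 : ∑ i, lam i * (t * ‖v i - x‖ ^ 2) = 0 :=
    le_antisymm hle (Finset.sum_nonneg hnn)
  intro i
  have h0 := (Finset.sum_eq_zero_iff_of_nonneg hnn).mp heq0 i (Finset.mem_univ i)
  have hsq : ‖v i - x‖ ^ 2 = 0 := by
    rcases mul_eq_zero.mp h0 with h | h
    · exact absurd h (hpos i).ne'
    rcases mul_eq_zero.mp h with h | h
    · exact absurd h ht.ne'
    · exact h
  have := norm_eq_zero.mp (pow_eq_zero_iff (by norm_num : 2 ≠ 0) |>.mp hsq)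
  exact sub_eq_zero.mp this

private lemma forall_mem_resAvg {n : ℕ} {μ : ℝ} {lam : Fin n → ℝ}
    (hsum : ∑ i, lam i = 1) {A : Fin n → H → Set H} {x w : H}
    (hw : ∀ i, w ∈ A i x) : w ∈ SVP.resAvg μ lam A x := by
  refine (mem_resAvg_iff μ lam A x w).mpr ⟨fun _ => x, fun i => ⟨w, hw i, rfl⟩, ?_⟩
  rw [← Finset.sum_smul, hsum, one_smul]

private lemma resAvg_subset {n : ℕ} {μ : ℝ} (hμ : 0 < μ) {lam : Fin n → ℝ}
    (hpos : ∀ i, 0 < lam i) (hsum : ∑ i, lam i = 1) {A : Fin n → H → Set H}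
    (hmono : ∀ i, SVP.IsMonotone (A i)) {x w u₀ : H} (hu₀ : ∀ i, u₀ ∈ A i x)
    (hw : w ∈ SVP.resAvg μ lam A x) : ∀ i, w ∈ A i x := by
  obtain ⟨v, hv, hx⟩ := (mem_resAvg_iff μ lam A x w).mp hw
  choose a ha heq using hv
  have hμ' : (0 : ℝ) < μ⁻¹ := inv_pos.mpr hμ
  have hineq : ∀ i, μ⁻¹ * ‖v i - x‖ ^ 2 ≤ ⟪v i - x, w - u₀⟫ := by
    intro i
    have hm := hmono i (ha i) (hu₀ i)
    have h1 : a i = w + μ⁻¹ • x - μ⁻¹ • v i := by rw [heq i]; abel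
    have h2 : a i - u₀ = (w - u₀) + μ⁻¹ • (-(v i - x)) := by
      rw [h1, neg_sub, smul_sub]; abel
    have h3 : ⟪v i - x, a i - u₀⟫ = ⟪v i - x, w - u₀⟫ - μ⁻¹ * ‖v i - x‖ ^ 2 := by
      rw [h2, inner_add_right, real_inner_smul_right, inner_neg_right,
        real_inner_self_eq_norm_sq]
      ring
    rw [h3] at hm; linarith
  have hvx := key_forces_eq hpos hsum hx hμ' (w - u₀) hineq
  intro i
  have h1 : a i = w + μ⁻¹ • x - μ⁻¹ • v i := by rw [heq i]; abel
  have haw : a i = w := by rw [h1, hvx i]; abel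
  have := ha i
  rwa [hvx i, haw] at this

private lemma resAvg_inv_subset {n : ℕ} {μ : ℝ} (hμ : 0 < μ) {lam : Fin n → ℝ}
    (hpos : ∀ i, 0 < lam i) (hsum : ∑ i, lam i = 1) {A : Fin n → H → Set H}
    (hmono : ∀ i, SVP.IsMonotone (A i)) {x u x₀ : H} (hx₀ : ∀ i, u ∈ A i x₀)
    (hw : u ∈ SVP.resAvg μ lam A x) : ∀ i, u ∈ A i x := by
  obtain ⟨v, hv, hx⟩ := (mem_resAvg_iff μ lam A x u).mp hw
  choose a ha heq using hv
  have hμ' : (0 : ℝ) < μ⁻¹ := inv_pos.mpr hμ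
  have hineq : ∀ i, 1 * ‖v i - x‖ ^ 2 ≤ ⟪v i - x, x₀ - x⟫ := by
    intro i
    have hm := hmono i (ha i) (hx₀ i)
    have h1 : a i = u + μ⁻¹ • x - μ⁻¹ • v i := by rw [heq i]; abel
    have h2 : a i - u = μ⁻¹ • (x - v i) := by rw [h1, smul_sub]; abel
    have h4 : 0 ≤ ⟪v i - x₀, x - v i⟫ := by
      rw [h2, real_inner_smul_right] at hm
      nlinarith [hm, hμ']
    have h5 : v i - x₀ = (v i - x) + (x - x₀) := by abel
    have h6 : x - v i = -(v i - x) := by abel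
    have hexp : ⟪v i - x₀, x - v i⟫ = ⟪v i - x, x₀ - x⟫ - ‖v i - x‖ ^ 2 := by
      rw [h5, h6, inner_add_left, inner_neg_right, inner_neg_right,
        real_inner_self_eq_norm_sq, show (x₀ - x : H) = -(x - x₀) by abel,
        inner_neg_right, real_inner_comm]
      ring
    rw [hexp] at h4; linarith
  have hvx := key_forces_eq hpos hsum hx one_pos (x₀ - x) hineq
  intro i
  have h1 : a i = u + μ⁻¹ • x - μ⁻¹ • v i := by rw [heq i]; abel
  have hau : a i = u := by rw [h1, hvx i]; abel
  have := ha i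
  rwa [hvx i, hau] at this

/-- Common solutions to monotone inclusions: if `⋂ᵢ Aᵢ x ≠ ∅` then
`R_μ(A,λ) x = ⋂ᵢ Aᵢ x`, and if `⋂ᵢ Aᵢ⁻¹ u ≠ ∅` then `(R_μ(A,λ))⁻¹ u = ⋂ᵢ Aᵢ⁻¹ u`. -/
theorem stmt3 {n : ℕ} (hn : 0 < n) {μ : ℝ} (hμ : 0 < μ) (lam : Fin n → ℝ)
    (hpos : ∀ i, 0 < lam i) (hsum : ∑ i, lam i = 1) (A : Fin n → H → Set H)
    (hA : ∀ i, SVP.IsMaxMonotone (A i)) (x u : H) :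
    ((⋂ i, A i x).Nonempty → SVP.resAvg μ lam A x = ⋂ i, A i x) ∧
    ((⋂ i, SVP.inv (A i) u).Nonempty →
      SVP.inv (SVP.resAvg μ lam A) u = ⋂ i, SVP.inv (A i) u) := by
  have hmono : ∀ i, SVP.IsMonotone (A i) := fun i => (hA i).1
  constructor
  · rintro ⟨u₀, hu₀⟩
    rw [Set.mem_iInter] at hu₀
    ext w
    rw [Set.mem_iInter]
    exact ⟨fun hw i => resAvg_subset hμ hpos hsum hmono hu₀ hw i,
      fun hw => forall_mem_resAvg hsum hw⟩
  · rintro ⟨x₀, hx₀⟩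
    rw [Set.mem_iInter] at hx₀
    ext y
    rw [Set.mem_iInter]
    constructor
    · intro hy i
      exact resAvg_inv_subset hμ hpos hsum hmono (fun j => hx₀ j) hy i
    · intro hy
      exact forall_mem_resAvg hsum fun j => hy j
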